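/- Let δ > 0, let m, n : ℕ → ℝ be strictly increasing sequences of real numbers, and let a, b : ℕ → ℂ be sequences of complex numbers with a_i ≠ 0 and b_i ≠ 0 for every i. Suppose that for every complex number z with 0 < |z| < δ, both families (a_i · z^{m_i})_{i∈ℕ} and (b_i · z^{n_i})_{i∈ℕ} are absolutely summable and ∑_{i} a_i · z^{m_i} = ∑_{i} b_i · z^{n_i}. Then m_i = n_i and a_i = b_i for every i. -/

import Mathlib

open Filter Topology

private lemma rpow_tendsto_zero' {q : ℝ} (hq : 0 < q) :
    Tendsto (fun t : ℝ => t ^ q) (𝓝[>] 0) (𝓝 0) := by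
  have h : ContinuousAt (fun t : ℝ => t ^ q) 0 :=
    Real.continuousAt_rpow_const 0 q (Or.inr hq.le)
  have h2 := h.tendsto
  rw [Real.zero_rpow hq.ne'] at h2
  exact h2.mono_left nhdsWithin_le_nhds

private lemma tail_tendsto_zero (t0 : ℝ) (ht0 : 0 < t0) (A : ℕ → ℂ) (E : ℕ → ℝ)
    (q : ℝ) (hq : 0 < q) (hE : ∀ i, q ≤ E i)
    (hsum : Summable (fun i => ‖A i‖ * t0 ^ E i)) :
    Tendsto (fun t : ℝ => ∑' i, A i * ((t ^ E i : ℝ) : ℂ)) (𝓝[>] 0) (𝓝 0) := by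
  set C := ∑' i, ‖A i‖ * t0 ^ E i with hC
  apply squeeze_zero_norm' (a := fun t => C * (t / t0) ^ q)
  · filter_upwards [Ioo_mem_nhdsGT_of_mem (Set.left_mem_Ico.2 ht0)] with t ht
    obtain ⟨ht1, ht2⟩ := ht
    have hratio0 : 0 < t / t0 := div_pos ht1 ht0
    have hratio1 : t / t0 ≤ 1 := (div_le_one ht0).2 ht2.le
    have key : ∀ i, ‖A i * ((t ^ E i : ℝ) : ℂ)‖ ≤ ‖A i‖ * t0 ^ E i * (t / t0) ^ q := by
      intro i
      have h1 : t ^ E i = (t / t0) ^ E i * t0 ^ E i := by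
        rw [← Real.mul_rpow hratio0.le ht0.le, div_mul_cancel₀ _ ht0.ne']
      have h2 : (t / t0) ^ E i ≤ (t / t0) ^ q :=
        Real.rpow_le_rpow_of_exponent_ge hratio0 hratio1 (hE i)
      rw [norm_mul, Complex.norm_real, Real.norm_eq_abs,
        abs_of_nonneg (Real.rpow_nonneg ht1.le _), h1]
      calc ‖A i‖ * ((t / t0) ^ E i * t0 ^ E i)
          ≤ ‖A i‖ * ((t / t0) ^ q * t0 ^ E i) := by
            refine mul_le_mul_of_nonneg_left ?_ (norm_nonneg _)
            exact mul_le_mul_of_nonneg_right h2 (Real.rpow_nonneg ht0.le _)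
        _ = ‖A i‖ * t0 ^ E i * (t / t0) ^ q := by ring
    have hsum2 : Summable (fun i => ‖A i‖ * t0 ^ E i * (t / t0) ^ q) :=
      hsum.mul_right _
    have hsum3 : Summable (fun i => ‖A i * ((t ^ E i : ℝ) : ℂ)‖) :=
      Summable.of_nonneg_of_le (fun i => norm_nonneg _) key hsum2
    calc ‖∑' i, A i * ((t ^ E i : ℝ) : ℂ)‖
        ≤ ∑' i, ‖A i * ((t ^ E i : ℝ) : ℂ)‖ := norm_tsum_le_tsum_norm hsum3
      _ ≤ ∑' i, ‖A i‖ * t0 ^ E i * (t / t0) ^ q := Summable.tsum_le_tsum key hsum3 hsum2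
      _ = C * (t / t0) ^ q := by rw [tsum_mul_right]
  · have h1 : Tendsto (fun t : ℝ => t / t0) (𝓝[>] 0) (𝓝[>] 0) := by
      rw [tendsto_nhdsWithin_iff]
      constructor
      · have := (continuous_id.div_const t0).tendsto (0 : ℝ)
        simpa using this.mono_left nhdsWithin_le_nhds
      · filter_upwards [self_mem_nhdsWithin] with t ht
        exact div_pos ht ht0
    have h2 : Tendsto (fun t : ℝ => (t / t0) ^ q) (𝓝[>] 0) (𝓝 0) :=
      (rpow_tendsto_zero' hq).comp h1
    simpa using tendsto_const_nhds.mul h2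

private lemma series_tendsto (t0 : ℝ) (ht0 : 0 < t0) (A : ℕ → ℂ) (M : ℕ → ℝ)
    (hM : StrictMono M) (p : ℝ) (hp : p ≤ M 0)
    (hsum : Summable (fun i => ‖A i‖ * t0 ^ M i)) :
    Tendsto (fun t : ℝ => ∑' i, A i * ((t ^ (M i - p) : ℝ) : ℂ)) (𝓝[>] 0)
      (𝓝 (if p = M 0 then A 0 else 0)) := by
  -- summability of the shifted-exponent norm series at t0
  have hsum' : Summable (fun i => ‖A i‖ * t0 ^ (M i - p)) := by
    refine (hsum.mul_right (t0 ^ p)⁻¹).congr fun i => ?_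
    rw [Real.rpow_sub ht0]
    ring
  -- tail tendsto 0
  have hq : 0 < M 1 - p := by
    have := hM (Nat.zero_lt_one)
    linarith
  have htail : Tendsto (fun t : ℝ => ∑' i, A (i + 1) * ((t ^ (M (i + 1) - p) : ℝ) : ℂ))
      (𝓝[>] 0) (𝓝 0) := by
    refine tail_tendsto_zero t0 ht0 (fun i => A (i + 1)) (fun i => M (i + 1) - p)
      (M 1 - p) hq (fun i => ?_) ((summable_nat_add_iff 1).2 hsum')
    show M 1 - p ≤ M (i + 1) - p
    have : M 1 ≤ M (i + 1) := hM.monotone (Nat.succ_le_succ (Nat.zero_le i))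
    linarith
  -- head tendsto
  have hhead : Tendsto (fun t : ℝ => A 0 * ((t ^ (M 0 - p) : ℝ) : ℂ)) (𝓝[>] 0)
      (𝓝 (if p = M 0 then A 0 else 0)) := by
    by_cases hpM : p = M 0
    · simp only [hpM, sub_self, Real.rpow_zero, Complex.ofReal_one, mul_one, if_pos rfl]
      exact tendsto_const_nhds
    · have hlt : 0 < M 0 - p := lt_of_le_of_ne (by linarith) (by
        intro hcon; exact hpM (by linarith))
      have h1 : Tendsto (fun t : ℝ => ((t ^ (M 0 - p) : ℝ) : ℂ)) (𝓝[>] 0) (𝓝 0) := by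
        have := (Complex.continuous_ofReal.tendsto 0).comp (rpow_tendsto_zero' hlt)
        simpa [Function.comp_def] using this
      rw [if_neg hpM]
      simpa using tendsto_const_nhds.mul h1
  have hcomb := hhead.add htail
  rw [add_zero] at hcomb
  refine Tendsto.congr' ?_ hcomb
  filter_upwards [Ioo_mem_nhdsGT_of_mem (Set.left_mem_Ico.2 ht0)] with t ht
  obtain ⟨ht1, ht2⟩ := ht
  -- summability of complex series at t
  have hst : Summable (fun i => A i * ((t ^ (M i - p) : ℝ) : ℂ)) := by
    refine Summable.of_norm (Summable.of_nonneg_of_le (fun i => norm_nonneg _)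
      (fun i => ?_) hsum')
    rw [norm_mul, Complex.norm_real, Real.norm_eq_abs,
      abs_of_nonneg (Real.rpow_nonneg ht1.le _)]
    refine mul_le_mul_of_nonneg_left ?_ (norm_nonneg _)
    refine Real.rpow_le_rpow ht1.le ht2.le ?_
    have : M 0 ≤ M i := hM.monotone (Nat.zero_le i)
    linarith
  exact (Summable.tsum_eq_zero_add hst).symm

private lemma leading_eq (δ : ℝ) (hδ : 0 < δ) (M N : ℕ → ℝ) (hM : StrictMono M)
    (hN : StrictMono N) (A B : ℕ → ℂ) (hA : A 0 ≠ 0) (hB : B 0 ≠ 0)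
    (hsA : ∀ t : ℝ, 0 < t → t < δ → Summable (fun i => ‖A i‖ * t ^ M i))
    (hsB : ∀ t : ℝ, 0 < t → t < δ → Summable (fun i => ‖B i‖ * t ^ N i))
    (heq : ∀ t : ℝ, 0 < t → t < δ →
      ∑' i, A i * ((t ^ M i : ℝ) : ℂ) = ∑' i, B i * ((t ^ N i : ℝ) : ℂ)) :
    M 0 = N 0 ∧ A 0 = B 0 := by
  set t0 : ℝ := δ / 2 with ht0def
  have ht0 : 0 < t0 := by positivity
  have ht0δ : t0 < δ := by rw [ht0def]; linarith
  set p : ℝ := min (M 0) (N 0) with hpdef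
  have hpM : p ≤ M 0 := min_le_left _ _
  have hpN : p ≤ N 0 := min_le_right _ _
  -- the two shifted series agree eventually
  have hFG : ∀ᶠ t in 𝓝[>] (0 : ℝ),
      (∑' i, A i * ((t ^ (M i - p) : ℝ) : ℂ)) = ∑' i, B i * ((t ^ (N i - p) : ℝ) : ℂ) := by
    filter_upwards [Ioo_mem_nhdsGT_of_mem (Set.left_mem_Ico.2 ht0)] with t ht
    obtain ⟨ht1, ht2⟩ := ht
    have key : ∀ (C : ℕ → ℂ) (E : ℕ → ℝ),
        (∑' i, C i * ((t ^ (E i - p) : ℝ) : ℂ)) =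
          (∑' i, C i * ((t ^ E i : ℝ) : ℂ)) * ((t ^ (-p) : ℝ) : ℂ) := by
      intro C E
      rw [← tsum_mul_right]
      congr 1
      funext i
      rw [sub_eq_add_neg, Real.rpow_add ht1, Complex.ofReal_mul, mul_assoc]
    rw [key A M, key B N, heq t ht1 (ht2.trans ht0δ)]
  have hTA := series_tendsto t0 ht0 A M hM p hpM (hsA t0 ht0 ht0δ)
  have hTB := series_tendsto t0 ht0 B N hN p hpN (hsB t0 ht0 ht0δ)
  have huniq : (if p = M 0 then A 0 else 0) = (if p = N 0 then B 0 else 0) :=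
    tendsto_nhds_unique (hTA.congr' hFG) hTB
  rcases lt_trichotomy (M 0) (N 0) with hlt | heq0 | hgt
  · exfalso
    have h1 : p = M 0 := min_eq_left hlt.le
    have h2 : p ≠ N 0 := by rw [h1]; exact ne_of_lt hlt
    rw [if_pos h1, if_neg h2] at huniq
    exact hA huniq
  · have h1 : p = M 0 := by rw [hpdef, heq0, min_self]
    have h2 : p = N 0 := by rw [hpdef, heq0, min_self]
    rw [if_pos h1, if_pos h2] at huniq
    exact ⟨heq0, huniq⟩
  · exfalso
    have h1 : p = N 0 := min_eq_right hgt.le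
    have h2 : p ≠ M 0 := by rw [h1]; exact ne_of_lt hgt
    rw [if_neg h2, if_pos h1] at huniq
    exact hB huniq.symm

theorem expansion_uniqueness_14_5 (δ : ℝ) (hδ : 0 < δ)
    (m n : ℕ → ℝ) (hm : StrictMono m) (hn : StrictMono n)
    (a b : ℕ → ℂ) (ha : ∀ i, a i ≠ 0) (hb : ∀ i, b i ≠ 0)
    (h : ∀ z : ℂ, 0 < ‖z‖ → ‖z‖ < δ →
      Summable (fun i : ℕ => ‖a i * z ^ ((m i : ℝ) : ℂ)‖) ∧
      Summable (fun i : ℕ => ‖b i * z ^ ((n i : ℝ) : ℂ)‖) ∧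
      ∑' i : ℕ, a i * z ^ ((m i : ℝ) : ℂ) = ∑' i : ℕ, b i * z ^ ((n i : ℝ) : ℂ)) :
    ∀ i : ℕ, m i = n i ∧ a i = b i := by
  have hreal : ∀ t : ℝ, 0 < t → t < δ →
      Summable (fun i => ‖a i‖ * t ^ m i) ∧ Summable (fun i => ‖b i‖ * t ^ n i) ∧
      ∑' i, a i * ((t ^ m i : ℝ) : ℂ) = ∑' i, b i * ((t ^ n i : ℝ) : ℂ) := by
    intro t ht htδ
    have habs : ‖(t : ℂ)‖ = t := by
      rw [Complex.norm_real, Real.norm_eq_abs, abs_of_pos ht]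
    obtain ⟨h1, h2, h3⟩ := h (t : ℂ) (by rwa [habs]) (by rwa [habs])
    have ecpow : ∀ r : ℝ, ((t : ℂ)) ^ ((r : ℝ) : ℂ) = ((t ^ r : ℝ) : ℂ) := fun r =>
      (Complex.ofReal_cpow ht.le r).symm
    have hnorm : ∀ (c : ℂ) (r : ℝ), ‖c * ((t ^ r : ℝ) : ℂ)‖ = ‖c‖ * t ^ r := by
      intro c r
      rw [norm_mul, Complex.norm_real, Real.norm_eq_abs,
        abs_of_nonneg (Real.rpow_nonneg ht.le _)]
    refine ⟨?_, ?_, ?_⟩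
    · refine h1.congr fun i => ?_
      rw [ecpow, hnorm]
    · refine h2.congr fun i => ?_
      rw [ecpow, hnorm]
    · calc ∑' i, a i * ((t ^ m i : ℝ) : ℂ)
          = ∑' i, a i * ((t : ℂ)) ^ ((m i : ℝ) : ℂ) := by
            congr 1; funext i; rw [ecpow]
        _ = ∑' i, b i * ((t : ℂ)) ^ ((n i : ℝ) : ℂ) := h3
        _ = ∑' i, b i * ((t ^ n i : ℝ) : ℂ) := by
            congr 1; funext i; rw [ecpow]
  intro i
  induction i using Nat.strong_induction_on with
  | _ k IH =>
    have hMk : StrictMono (fun i => m (i + k)) := fun i j hij =>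
      hm (Nat.add_lt_add_right hij k)
    have hNk : StrictMono (fun i => n (i + k)) := fun i j hij =>
      hn (Nat.add_lt_add_right hij k)
    have htails : ∀ t : ℝ, 0 < t → t < δ →
        ∑' i, a (i + k) * ((t ^ m (i + k) : ℝ) : ℂ)
          = ∑' i, b (i + k) * ((t ^ n (i + k) : ℝ) : ℂ) := by
      intro t ht htδ
      obtain ⟨s1, s2, s3⟩ := hreal t ht htδ
      have hnorm : ∀ (c : ℂ) (r : ℝ), ‖c * ((t ^ r : ℝ) : ℂ)‖ = ‖c‖ * t ^ r := by
        intro c r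
        rw [norm_mul, Complex.norm_real, Real.norm_eq_abs,
          abs_of_nonneg (Real.rpow_nonneg ht.le _)]
      have sA : Summable (fun i => a i * ((t ^ m i : ℝ) : ℂ)) :=
        Summable.of_norm (s1.congr fun i => (hnorm (a i) (m i)).symm)
      have sB : Summable (fun i => b i * ((t ^ n i : ℝ) : ℂ)) :=
        Summable.of_norm (s2.congr fun i => (hnorm (b i) (n i)).symm)
      have hA := Summable.sum_add_tsum_nat_add (f := fun i => a i * ((t ^ m i : ℝ) : ℂ)) k sA
      have hB := Summable.sum_add_tsum_nat_add (f := fun i => b i * ((t ^ n i : ℝ) : ℂ)) k sB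
      have hfin : ∑ j ∈ Finset.range k, a j * ((t ^ m j : ℝ) : ℂ)
          = ∑ j ∈ Finset.range k, b j * ((t ^ n j : ℝ) : ℂ) := by
        refine Finset.sum_congr rfl fun j hj => ?_
        obtain ⟨hmn, hab⟩ := IH j (Finset.mem_range.1 hj)
        rw [hmn, hab]
      have h5 := hA.trans (s3.trans hB.symm)
      rw [hfin] at h5
      exact add_left_cancel h5
    have key := leading_eq δ hδ (fun i => m (i + k)) (fun i => n (i + k)) hMk hNk
      (fun i => a (i + k)) (fun i => b (i + k)) (ha _) (hb _)
      (fun t ht htδ =>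
        (summable_nat_add_iff (f := fun i => ‖a i‖ * t ^ m i) k).2 (hreal t ht htδ).1)
      (fun t ht htδ =>
        (summable_nat_add_iff (f := fun i => ‖b i‖ * t ^ n i) k).2 (hreal t ht htδ).2.1)
      htails
    simpa using key
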